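/- Let N ∈ ℕ, X_min ≤ 0 ≤ X_max, b_min ≤ b_0 ≤ b_max, η_ch, η_dis ∈ (0,1], and price sequences P_b^A, P_s^A, P̃_b^B, P̃_s^B : Fin N → ℝ. Let v_{K1} be the infimum of Σᵢ [ min(P_b^A(i), P̃_b^B(i))·max(x(i),0)/η_ch − max(P_s^A(i), P̃_s^B(i))·η_dis·max(−x(i),0) ] over all x : Fin N → ℝ with X_min ≤ x(i) ≤ X_max and b_min ≤ b_0 + Σ_{j ≤ i} x(j) ≤ b_max for all i. Let v_{K2} be the infimum of Σᵢ [ P_b^A(i)·max(x_a(i),0)/η_ch − P_s^A(i)·η_dis·max(−x_a(i),0) + P̃_b^B(i)·max(x_b(i),0)/η_ch − P̃_s^B(i)·η_dis·max(−x_b(i),0) ] over all (x_a, x_b) with, for every i: X_min ≤ x_a(i) ≤ X_max, X_min ≤ x_b(i) ≤ X_max, X_min ≤ x_a(i)+x_b(i) ≤ X_max, x_a(i)·x_b(i) ≥ 0, and b_min ≤ b_0 + Σ_{j ≤ i}(x_a(j)+x_b(j)) ≤ b_max. Then v_{K2} ≤ v_{K1}; i.e., the multi-market model K2 achieves at most the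 cost (at least the revenue) of the single-market-per-step model K1. -/

import Mathlib

private lemma maxsplit (a b : ℝ) (h : a * b ≥ 0) :
    max (a + b) 0 = max a 0 + max b 0 ∧
    max (-(a + b)) 0 = max (-a) 0 + max (-b) 0 := by
  have hcases : (0 ≤ a ∧ 0 ≤ b) ∨ (a ≤ 0 ∧ b ≤ 0) := by
    rcases le_total 0 a with ha | ha <;> rcases le_total 0 b with hb | hb
    · exact Or.inl ⟨ha, hb⟩
    · have : a * b ≤ 0 := mul_nonpos_of_nonneg_of_nonpos ha hb
      have : a * b = 0 := le_antisymm this h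
      rcases mul_eq_zero.mp this with h0 | h0
      · exact Or.inr ⟨le_of_eq h0, hb⟩
      · exact Or.inl ⟨ha, le_of_eq h0.symm⟩
    · have : b * a ≤ 0 := mul_nonpos_of_nonneg_of_nonpos hb ha
      have : a * b = 0 := le_antisymm (by linarith [mul_comm a b]) h
      rcases mul_eq_zero.mp this with h0 | h0
      · exact Or.inl ⟨le_of_eq h0.symm, hb⟩
      · exact Or.inr ⟨ha, le_of_eq h0⟩
    · exact Or.inr ⟨ha, hb⟩
  rcases hcases with ⟨ha, hb⟩ | ⟨ha, hb⟩
  · constructor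
    · rw [max_eq_left (by linarith), max_eq_left ha, max_eq_left hb]
    · rw [max_eq_right (by linarith), max_eq_right (by linarith),
        max_eq_right (by linarith)]; ring
  · constructor
    · rw [max_eq_right (by linarith), max_eq_right ha, max_eq_right hb]; ring
    · rw [max_eq_left (by linarith), max_eq_left (by linarith),
        max_eq_left (by linarith)]; ring

/-- The multi-market model K2 achieves at most the cost (at least the revenue)
of the single-market-per-step model K1: `v_K2 ≤ v_K1`. -/
theorem stmt9 (N : ℕ) (Xmin Xmax bmin b0 bmax ηch ηdis : ℝ)
    (hX1 : Xmin ≤ 0) (hX2 : 0 ≤ Xmax) (hb1 : bmin ≤ b0) (hb2 : b0 ≤ bmax)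
    (hch : ηch ∈ Set.Ioc (0 : ℝ) 1) (hdis : ηdis ∈ Set.Ioc (0 : ℝ) 1)
    (PbA PsA PbB PsB : Fin N → ℝ)
    (F1 : Set (Fin N → ℝ))
    (hF1 : F1 = {x | ∀ i, Xmin ≤ x i ∧ x i ≤ Xmax ∧
      bmin ≤ b0 + ∑ j ∈ Finset.Iic i, x j ∧ b0 + ∑ j ∈ Finset.Iic i, x j ≤ bmax})
    (J1 : (Fin N → ℝ) → ℝ)
    (hJ1 : J1 = fun x => ∑ i, (min (PbA i) (PbB i) * max (x i) 0 / ηch -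
      max (PsA i) (PsB i) * ηdis * max (-(x i)) 0))
    (F2 : Set ((Fin N → ℝ) × (Fin N → ℝ)))
    (hF2 : F2 = {p | ∀ i, Xmin ≤ p.1 i ∧ p.1 i ≤ Xmax ∧ Xmin ≤ p.2 i ∧ p.2 i ≤ Xmax ∧
      Xmin ≤ p.1 i + p.2 i ∧ p.1 i + p.2 i ≤ Xmax ∧ p.1 i * p.2 i ≥ 0 ∧
      bmin ≤ b0 + ∑ j ∈ Finset.Iic i, (p.1 j + p.2 j) ∧
      b0 + ∑ j ∈ Finset.Iic i, (p.1 j + p.2 j) ≤ bmax})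
    (J2 : (Fin N → ℝ) × (Fin N → ℝ) → ℝ)
    (hJ2 : J2 = fun p => ∑ i,
      (PbA i * max (p.1 i) 0 / ηch - PsA i * ηdis * max (-(p.1 i)) 0 +
       (PbB i * max (p.2 i) 0 / ηch - PsB i * ηdis * max (-(p.2 i)) 0))) :
    sInf (J2 '' F2) ≤ sInf (J1 '' F1) := by
  classical
  obtain ⟨hch0, hch1⟩ := hch
  obtain ⟨hdis0, hdis1⟩ := hdis
  subst hF1 hJ1 hF2 hJ2
  -- For every p ∈ F2, (p.1 + p.2) ∈ F1 and J1 (p.1+p.2) ≤ J2 p.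
  have key2 : ∀ p : (Fin N → ℝ) × (Fin N → ℝ),
      (∀ i, Xmin ≤ p.1 i ∧ p.1 i ≤ Xmax ∧ Xmin ≤ p.2 i ∧ p.2 i ≤ Xmax ∧
        Xmin ≤ p.1 i + p.2 i ∧ p.1 i + p.2 i ≤ Xmax ∧ p.1 i * p.2 i ≥ 0 ∧
        bmin ≤ b0 + ∑ j ∈ Finset.Iic i, (p.1 j + p.2 j) ∧
        b0 + ∑ j ∈ Finset.Iic i, (p.1 j + p.2 j) ≤ bmax) →
      (fun i => p.1 i + p.2 i) ∈
        {x : Fin N → ℝ | ∀ i, Xmin ≤ x i ∧ x i ≤ Xmax ∧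
          bmin ≤ b0 + ∑ j ∈ Finset.Iic i, x j ∧ b0 + ∑ j ∈ Finset.Iic i, x j ≤ bmax} ∧
      (∑ i, (min (PbA i) (PbB i) * max (p.1 i + p.2 i) 0 / ηch -
        max (PsA i) (PsB i) * ηdis * max (-(p.1 i + p.2 i)) 0)) ≤
      ∑ i, (PbA i * max (p.1 i) 0 / ηch - PsA i * ηdis * max (-(p.1 i)) 0 +
        (PbB i * max (p.2 i) 0 / ηch - PsB i * ηdis * max (-(p.2 i)) 0)) := by
    intro p hp
    constructor
    · intro i
      obtain ⟨_, _, _, _, h5, h6, _, h8, h9⟩ := hp i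
      exact ⟨h5, h6, h8, h9⟩
    · apply Finset.sum_le_sum
      intro i _
      obtain ⟨_, _, _, _, _, _, h7, _, _⟩ := hp i
      obtain ⟨hs1, hs2⟩ := maxsplit (p.1 i) (p.2 i) h7
      rw [hs1, hs2]
      have h1 : min (PbA i) (PbB i) * max (p.1 i) 0 ≤ PbA i * max (p.1 i) 0 :=
        mul_le_mul_of_nonneg_right (min_le_left _ _) (le_max_right _ _)
      have h2 : min (PbA i) (PbB i) * max (p.2 i) 0 ≤ PbB i * max (p.2 i) 0 :=
        mul_le_mul_of_nonneg_right (min_le_right _ _) (le_max_right _ _)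
      have h3 : PsA i * max (-(p.1 i)) 0 ≤ max (PsA i) (PsB i) * max (-(p.1 i)) 0 :=
        mul_le_mul_of_nonneg_right (le_max_left _ _) (le_max_right _ _)
      have h4 : PsB i * max (-(p.2 i)) 0 ≤ max (PsA i) (PsB i) * max (-(p.2 i)) 0 :=
        mul_le_mul_of_nonneg_right (le_max_right _ _) (le_max_right _ _)
      have hd1 : min (PbA i) (PbB i) * (max (p.1 i) 0 + max (p.2 i) 0) / ηch ≤
          PbA i * max (p.1 i) 0 / ηch + PbB i * max (p.2 i) 0 / ηch := by
        rw [← add_div]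
        exact (div_le_div_iff_of_pos_right hch0).mpr (by nlinarith)
      have hd2 : PsA i * ηdis * max (-(p.1 i)) 0 + PsB i * ηdis * max (-(p.2 i)) 0 ≤
          max (PsA i) (PsB i) * ηdis * (max (-(p.1 i)) 0 + max (-(p.2 i)) 0) := by
        nlinarith [le_max_right (-(p.1 i)) (0:ℝ), le_max_right (-(p.2 i)) (0:ℝ)]
      linarith
  -- For every x ∈ F1, there is p ∈ F2 with J2 p = J1 x.
  have key1 : ∀ x : Fin N → ℝ,
      (∀ i, Xmin ≤ x i ∧ x i ≤ Xmax ∧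
        bmin ≤ b0 + ∑ j ∈ Finset.Iic i, x j ∧ b0 + ∑ j ∈ Finset.Iic i, x j ≤ bmax) →
      ∃ p : (Fin N → ℝ) × (Fin N → ℝ),
        (∀ i, Xmin ≤ p.1 i ∧ p.1 i ≤ Xmax ∧ Xmin ≤ p.2 i ∧ p.2 i ≤ Xmax ∧
          Xmin ≤ p.1 i + p.2 i ∧ p.1 i + p.2 i ≤ Xmax ∧ p.1 i * p.2 i ≥ 0 ∧
          bmin ≤ b0 + ∑ j ∈ Finset.Iic i, (p.1 j + p.2 j) ∧
          b0 + ∑ j ∈ Finset.Iic i, (p.1 j + p.2 j) ≤ bmax) ∧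
        (∑ i, (PbA i * max (p.1 i) 0 / ηch - PsA i * ηdis * max (-(p.1 i)) 0 +
          (PbB i * max (p.2 i) 0 / ηch - PsB i * ηdis * max (-(p.2 i)) 0))) =
        ∑ i, (min (PbA i) (PbB i) * max (x i) 0 / ηch -
          max (PsA i) (PsB i) * ηdis * max (-(x i)) 0) := by
    intro x hx
    set cond : Fin N → Prop := fun i => if 0 ≤ x i then PbA i ≤ PbB i else PsB i ≤ PsA i
      with hcond
    refine ⟨(fun i => if cond i then x i else 0, fun i => if cond i then 0 else x i),
      ?_, ?_⟩
    · intro i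
      obtain ⟨h1, h2, h3, h4⟩ := hx i
      have hsum : ∀ j, (if cond j then x j else 0) + (if cond j then 0 else x j) = x j := by
        intro j; by_cases h : cond j <;> simp [h]
      by_cases h : cond i <;>
        simp [h, hsum, h1, h2, h3, h4, hX1, hX2]
    · apply Finset.sum_congr rfl
      intro i _
      by_cases hc : cond i
      · simp only [if_pos hc]
        rcases le_or_gt 0 (x i) with hxi | hxi
        · have hA : PbA i ≤ PbB i := by
            have := hc; rw [hcond] at this; simpa [if_pos hxi] using this
          have hneg : max (-(x i)) 0 = 0 := max_eq_right (by linarith)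
          rw [min_eq_left hA, hneg]
          simp
        · have hA : PsB i ≤ PsA i := by
            have := hc; rw [hcond] at this; simpa [not_le.mpr hxi] using this
          have hpos : max (x i) 0 = 0 := max_eq_right (by linarith)
          rw [max_eq_left hA, hpos]
          simp
      · simp only [if_neg hc]
        rcases le_or_gt 0 (x i) with hxi | hxi
        · have hA : PbB i ≤ PbA i := by
            have := hc; rw [hcond] at this
            have h' : ¬ (PbA i ≤ PbB i) := by simpa [hxi] using this
            exact le_of_not_ge h'
          have hneg : max (-(x i)) 0 = 0 := max_eq_right (by linarith)
          rw [min_eq_right hA, hneg]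
          simp
        · have hA : PsA i ≤ PsB i := by
            have := hc; rw [hcond] at this
            have h' : ¬ (PsB i ≤ PsA i) := by simpa [not_le.mpr hxi] using this
            exact le_of_not_ge h'
          have hpos : max (x i) 0 = 0 := max_eq_right (by linarith)
          rw [max_eq_right hA, hpos]
          simp
  -- F1 is nonempty (x = 0 is feasible)
  have hF1ne : ((fun _ => (0:ℝ)) : Fin N → ℝ) ∈
      {x : Fin N → ℝ | ∀ i, Xmin ≤ x i ∧ x i ≤ Xmax ∧
        bmin ≤ b0 + ∑ j ∈ Finset.Iic i, x j ∧ b0 + ∑ j ∈ Finset.Iic i, x j ≤ bmax} := by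
    intro i; simp [hX1, hX2, hb1, hb2]
  by_cases hbdd : BddBelow ((fun p : (Fin N → ℝ) × (Fin N → ℝ) => ∑ i,
      (PbA i * max (p.1 i) 0 / ηch - PsA i * ηdis * max (-(p.1 i)) 0 +
       (PbB i * max (p.2 i) 0 / ηch - PsB i * ηdis * max (-(p.2 i)) 0))) ''
      {p | ∀ i, Xmin ≤ p.1 i ∧ p.1 i ≤ Xmax ∧ Xmin ≤ p.2 i ∧ p.2 i ≤ Xmax ∧
        Xmin ≤ p.1 i + p.2 i ∧ p.1 i + p.2 i ≤ Xmax ∧ p.1 i * p.2 i ≥ 0 ∧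
        bmin ≤ b0 + ∑ j ∈ Finset.Iic i, (p.1 j + p.2 j) ∧
        b0 + ∑ j ∈ Finset.Iic i, (p.1 j + p.2 j) ≤ bmax})
  · apply csInf_le_csInf hbdd ⟨_, Set.mem_image_of_mem _ hF1ne⟩
    rintro y ⟨x, hxF, rfl⟩
    obtain ⟨p, hpF, hpJ⟩ := key1 x hxF
    exact ⟨p, hpF, hpJ⟩
  · have hbdd1 : ¬ BddBelow ((fun x : Fin N → ℝ => ∑ i,
        (min (PbA i) (PbB i) * max (x i) 0 / ηch -
          max (PsA i) (PsB i) * ηdis * max (-(x i)) 0)) ''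
        {x | ∀ i, Xmin ≤ x i ∧ x i ≤ Xmax ∧
          bmin ≤ b0 + ∑ j ∈ Finset.Iic i, x j ∧ b0 + ∑ j ∈ Finset.Iic i, x j ≤ bmax}) := by
      intro ⟨c, hc⟩
      apply hbdd
      refine ⟨c, ?_⟩
      rintro y ⟨p, hpF, rfl⟩
      obtain ⟨hmem, hle⟩ := key2 p hpF
      have := hc (Set.mem_image_of_mem _ hmem)
      exact le_trans this hle
    rw [Real.sInf_of_not_bddBelow hbdd, Real.sInf_of_not_bddBelow hbdd1]
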